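/- Let SiLU(x) = x·σ(x), where σ(x) = 1/(1 + exp(−x)) is the sigmoid function. Let m be a positive integer and a_1,…,a_m, b_1,…,b_m, c_1,…,c_m real numbers such that |b_i| ≠ |b_j| whenever i ≠ j, and such that a_k·b_k ≠ 0 for some k. Then the function f(x) = Σ_{i=1}^m a_i SiLU(b_i x + c_i) is not constant on ℝ; that is, there exist x, y ∈ ℝ with f(x) ≠ f(y). -/

import Mathlib

/-- The sigmoid function. -/
noncomputable def sigmoid (x : ℝ) : ℝ := 1 / (1 + Real.exp (-x))

/-- The SiLU (Sigmoid Linear Unit) function. -/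
noncomputable def silu (x : ℝ) : ℝ := x * sigmoid x

open Filter Real

lemma sigmoid_eq (t : ℝ) : _root_.sigmoid t = Real.exp t / (Real.exp t + 1) := by
  unfold _root_.sigmoid
  rw [Real.exp_neg]
  have h := (Real.exp_pos t).ne'
  field_simp

lemma silu_neg_add (u : ℝ) : silu u = silu (-u) + u := by
  unfold silu _root_.sigmoid
  rw [Real.exp_neg, neg_neg]
  have h := (Real.exp_pos u).ne'
  have h2 : (1 : ℝ) + Real.exp u ≠ 0 := by positivity
  field_simp
  ring

lemma tendsto_silu_atBot : Tendsto silu atBot (nhds 0) := by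
  have h1 : Tendsto (fun x : ℝ => x * Real.exp x) atBot (nhds 0) := by
    have h := (Real.tendsto_pow_mul_exp_neg_atTop_nhds_zero 1).comp tendsto_neg_atBot_atTop
    have := h.neg
    simp only [Function.comp] at this ⊢
    simpa using this
  have h2 : Tendsto (fun x : ℝ => Real.exp x + 1) atBot (nhds 1) := by
    simpa using Real.tendsto_exp_atBot.add (tendsto_const_nhds (x := (1:ℝ)))
  have := h1.div h2 one_ne_zero
  simp only [zero_div] at this
  refine this.congr fun x => ?_
  simp only [Pi.div_apply, silu, sigmoid_eq]
  ring

lemma affine_atBot {b c : ℝ} (hb : 0 < b) : Tendsto (fun x : ℝ => b * x + c) atBot atBot :=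
  tendsto_atBot_add_const_right _ c ((tendsto_const_mul_atBot_of_pos hb).2 tendsto_id)

lemma tendsto_inv_bot : Tendsto (fun x : ℝ => x⁻¹) atBot (nhds 0) := by
  have := ((tendsto_inv_atTop_zero (𝕜 := ℝ)).comp tendsto_neg_atBot_atTop).neg
  simp only [Function.comp] at this
  simpa [inv_neg] using this

lemma term_tendsto (A b c β : ℝ) (hβ : 0 < β) (hbβ : β ≤ b) :
    Tendsto (fun x => A * silu (b * x + c) * Real.exp (-(β * x)) / x) atBot
      (nhds (if b = β then A * (β * Real.exp c) else 0)) := by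
  have hden : Tendsto (fun x : ℝ => Real.exp (b * x + c) + 1) atBot (nhds 1) := by
    simpa using ((Real.tendsto_exp_atBot.comp (affine_atBot (lt_of_lt_of_le hβ hbβ))).add
      (tendsto_const_nhds (x := (1:ℝ))))
  have hnum : Tendsto (fun x : ℝ => Real.exp ((b - β) * x + c)) atBot
      (nhds (if b = β then Real.exp c else 0)) := by
    rcases eq_or_lt_of_le hbβ with h | h
    · simp only [← h, sub_self, zero_mul, zero_add, if_pos rfl]
      exact tendsto_const_nhds
    · rw [if_neg h.ne']
      exact Real.tendsto_exp_atBot.comp (affine_atBot (by linarith))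
  have hlin : Tendsto (fun x : ℝ => A * (b + c * x⁻¹)) atBot (nhds (A * b)) := by
    simpa using (tendsto_const_nhds (x := A)).mul
      ((tendsto_const_nhds (x := b)).add (tendsto_inv_bot.const_mul c))
  have hG := hlin.mul (hnum.div hden one_ne_zero)
  have hval : A * b * ((if b = β then Real.exp c else 0) / 1)
      = (if b = β then A * (β * Real.exp c) else 0) := by
    rcases eq_or_ne b β with h | h <;> simp [h] <;> ring
  rw [hval] at hG
  refine hG.congr' ?_
  · filter_upwards [eventually_lt_atBot (0:ℝ)] with x hx
    have hx0 : x ≠ 0 := hx.ne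
    have he : (b - β) * x + c = (b * x + c) + (-(β * x)) := by ring
    simp only [Pi.div_apply]
    rw [he, Real.exp_add, silu, sigmoid_eq]
    have h1 : Real.exp (b * x + c) + 1 ≠ 0 := by positivity
    field_simp

lemma silu_abs_decomp (A B C x : ℝ) :
    A * silu (B * x + C) = A * silu (|B| * x + (if B < 0 then -C else C))
      + ((if B < 0 then A * B else 0) * x + (if B < 0 then A * C else 0)) := by
  by_cases h : B < 0
  · simp only [if_pos h, abs_of_neg h]
    have h1 : -B * x + -C = -(B * x + C) := by ring
    rw [h1, silu_neg_add (B * x + C)]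
    ring
  · simp [abs_of_nonneg (not_lt.1 h), h]

/-- A nontrivial finite linear combination of SiLUs with slopes of pairwise
distinct absolute values is not a constant function. -/
theorem stmt_8 (m : ℕ) (hm : 0 < m) (a b c : Fin m → ℝ)
    (hb : ∀ i j, i ≠ j → |b i| ≠ |b j|)
    (hk : ∃ k, a k * b k ≠ 0) :
    ∃ x y : ℝ,
      (∑ i, a i * silu (b i * x + c i)) ≠ (∑ i, a i * silu (b i * y + c i)) := by
  by_contra hcon
  push_neg at hcon
  obtain ⟨k, hk⟩ := hk
  have hak : a k ≠ 0 := fun h => hk (by simp [h])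
  have hbk : b k ≠ 0 := fun h => hk (by simp [h])
  set P : Finset (Fin m) := Finset.univ.filter (fun i => b i ≠ 0) with hP
  set c' : Fin m → ℝ := fun i => if b i < 0 then -c i else c i with hc'
  set h : ℝ → ℝ := fun x => ∑ i ∈ P, a i * silu (|b i| * x + c' i) with hh_def
  set s : ℝ := ∑ i, (if b i < 0 then a i * b i else 0) with hs_def
  -- pointwise decomposition of f
  have hsum : ∀ x : ℝ, (∑ i, a i * silu (b i * x + c i))
      = h x + (∑ i ∈ Finset.univ.filter (fun i => ¬ b i ≠ 0), a i * silu (c i))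
        + (s * x + ∑ i, (if b i < 0 then a i * c i else 0)) := by
    intro x
    have h1 : (∑ i, a i * silu (b i * x + c i))
        = ∑ i, (a i * silu (|b i| * x + c' i)
            + ((if b i < 0 then a i * b i else 0) * x + (if b i < 0 then a i * c i else 0))) :=
      Finset.sum_congr rfl (fun i _ => silu_abs_decomp (a i) (b i) (c i) x)
    rw [h1, Finset.sum_add_distrib, Finset.sum_add_distrib, ← Finset.sum_mul, ← hs_def]
    have h2 : (∑ i, a i * silu (|b i| * x + c' i))
        = h x + ∑ i ∈ Finset.univ.filter (fun i => ¬ b i ≠ 0), a i * silu (c i) := by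
      rw [hh_def, ← Finset.sum_filter_add_sum_filter_not Finset.univ (fun i => b i ≠ 0)]
      congr 1
      refine Finset.sum_congr rfl (fun i hi => ?_)
      simp only [Finset.mem_filter, not_not] at hi
      simp [hi.2, hc', not_lt.2 (le_of_eq hi.2.symm)]
    rw [h2]
  -- h x + s x is constant
  have hconst : ∀ x : ℝ, h x + s * x = h 0 := by
    intro x
    have := hcon x 0
    rw [hsum x, hsum 0] at this
    linarith
  -- h tends to 0 at -infty
  have hbpos : ∀ i ∈ P, 0 < |b i| := by
    intro i hi
    simp only [hP, Finset.mem_filter] at hi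
    exact abs_pos.2 hi.2
  have hh0 : Tendsto h atBot (nhds 0) := by
    have : Tendsto h atBot (nhds (∑ i ∈ P, (0:ℝ))) := by
      refine tendsto_finset_sum _ (fun i hi => ?_)
      have := (tendsto_silu_atBot.comp (affine_atBot (b := |b i|) (c := c' i) (hbpos i hi))).const_mul (a i)
      simpa [Function.comp, mul_zero] using this
    simpa using this
  -- s = 0
  have hs0 : s = 0 := by
    have hd : Tendsto (fun x => h x - h (x - 1)) atBot (nhds 0) := by
      have h2 : Tendsto (fun x : ℝ => x - 1) atBot atBot :=
        tendsto_atBot_add_const_right _ (-1) tendsto_id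
      simpa using hh0.sub (hh0.comp h2)
    have hcst : Tendsto (fun _ : ℝ => -s) atBot (nhds 0) := by
      refine hd.congr (fun x => ?_)
      have e1 := hconst x
      have e2 := hconst (x - 1)
      linarith
    have := tendsto_nhds_unique hcst tendsto_const_nhds
    linarith
  have hzero : ∀ x : ℝ, h x = 0 := by
    have h00 : h 0 = 0 := by
      have hcst : Tendsto (fun _ : ℝ => h 0) atBot (nhds 0) := by
        refine hh0.congr (fun x => ?_)
        have := hconst x
        rw [hs0] at this
        linarith
      exact tendsto_nhds_unique tendsto_const_nhds hcst
    intro x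
    have := hconst x
    rw [hs0, h00] at this
    linarith
  -- choose minimal |b i| among contributing indices
  set S : Finset (Fin m) := P.filter (fun i => a i ≠ 0) with hS
  have hkS : k ∈ S := by
    simp [hS, hP, hak, hbk]
  obtain ⟨i0, hi0S, hmin⟩ := S.exists_min_image (fun i => |b i|) ⟨k, hkS⟩
  have hi0P : i0 ∈ P := (Finset.mem_filter.1 hi0S).1
  have hai0 : a i0 ≠ 0 := by
    have := (Finset.mem_filter.1 hi0S).2
    simpa using this
  set β : ℝ := |b i0| with hβ_def
  have hβ : 0 < β := hbpos i0 hi0P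
  -- the rescaled function
  set L : Fin m → ℝ := fun i => if a i = 0 then 0
    else if |b i| = β then a i * (β * Real.exp (c' i)) else 0 with hL
  have hHlim : Tendsto (fun x => ∑ i ∈ P, a i * silu (|b i| * x + c' i) * Real.exp (-(β * x)) / x)
      atBot (nhds (∑ i ∈ P, L i)) := by
    refine tendsto_finset_sum _ (fun i hi => ?_)
    by_cases hai : a i = 0
    · simp only [hL, if_pos hai, hai, zero_mul, zero_div]
      exact tendsto_const_nhds
    · have hiS : i ∈ S := by
        simp only [hS, Finset.mem_filter]
        exact ⟨hi, hai⟩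
      have hge : β ≤ |b i| := hmin i hiS
      have := term_tendsto (a i) (|b i|) (c' i) β hβ hge
      simpa [hL, if_neg hai] using this
  have hH0 : Tendsto (fun x => ∑ i ∈ P, a i * silu (|b i| * x + c' i) * Real.exp (-(β * x)) / x)
      atBot (nhds 0) := by
    have he : ∀ x : ℝ, (∑ i ∈ P, a i * silu (|b i| * x + c' i) * Real.exp (-(β * x)) / x) = 0 := by
      intro x
      rw [← Finset.sum_div, ← Finset.sum_mul]
      have hx : (∑ i ∈ P, a i * silu (|b i| * x + c' i)) = 0 := hzero x
      rw [hx]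
      simp
    refine Tendsto.congr (fun x => (he x).symm) tendsto_const_nhds
  have hLsum : (∑ i ∈ P, L i) = a i0 * (β * Real.exp (c' i0)) := by
    rw [Finset.sum_eq_single_of_mem i0 hi0P]
    · simp [hL, hai0, hβ_def]
    · intro i hiP hne
      by_cases hai : a i = 0
      · simp [hL, hai]
      · have hne' : |b i| ≠ β := hb i i0 hne
        simp [hL, hai, hne']
  have heq := tendsto_nhds_unique hHlim hH0
  rw [hLsum] at heq
  have hne : a i0 * (β * Real.exp (c' i0)) ≠ 0 := by
    have := (Real.exp_pos (c' i0)).ne'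
    positivity
  exact hne heq
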